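/- Let n ∈ ℕ, A ∈ ℝ^{n×n}, B ∈ ℝⁿ, c ∈ ℝⁿ, D ∈ ℝ, and scalars Q, S, R ∈ ℝ. Let X ∈ ℝ^{n×n} be symmetric positive semidefinite, and suppose the symmetric (n+1)×(n+1) block matrix with blocks [AᵀXA − X − Q c cᵀ] (top-left, n×n), [AᵀXB − Q D c − S c] (top-right, n×1), and [BᵀXB − Q D² − 2 S D − R] (bottom-right, scalar) is negative semidefinite. Then for every input sequence u : ℕ → ℝ and the trajectory defined by x(0) = 0, x(t+1) = A x(t) + B u(t), y(t) = cᵀ x(t) + D u(t), one has Σ_{t=0}^{t_f} (Q y(t)² + 2 S y(t) u(t) + R u(t)²) ≥ 0 for every t_f ∈ ℕ. -/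

import Mathlib

open Matrix

/-- One-step dissipation inequality extracted from negative semidefiniteness
of the KYP block matrix. -/
lemma kyp_step {n : ℕ} {A X : Matrix (Fin n) (Fin n) ℝ} {B c : Fin n → ℝ} {D Q S R : ℝ}
    (hXs : Xᵀ = X)
    (hM : (-(Matrix.fromBlocks
        (Aᵀ * X * A - X - Q • Matrix.vecMulVec c c)
        (Matrix.of fun i (_ : Fin 1) =>
          Aᵀ.mulVec (X.mulVec B) i - Q * D * c i - S * c i)
        (Matrix.of fun (_ : Fin 1) j =>
          Aᵀ.mulVec (X.mulVec B) j - Q * D * c j - S * c j)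
        (Matrix.of fun (_ _ : Fin 1) =>
          B ⬝ᵥ X.mulVec B - Q * D ^ 2 - 2 * S * D - R))).PosSemidef)
    (a : Fin n → ℝ) (u0 : ℝ) :
    (A.mulVec a + u0 • B) ⬝ᵥ X.mulVec (A.mulVec a + u0 • B) ≤
      a ⬝ᵥ X.mulVec a +
      (Q * (c ⬝ᵥ a + D * u0) ^ 2 + 2 * S * (c ⬝ᵥ a + D * u0) * u0 + R * u0 ^ 2) := by
  have hsym : ∀ v w : Fin n → ℝ, v ⬝ᵥ X.mulVec w = w ⬝ᵥ X.mulVec v := by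
    intro v w
    rw [Matrix.dotProduct_mulVec, ← Matrix.mulVec_transpose, hXs, dotProduct_comm]
  have htr : ∀ w : Fin n → ℝ, a ⬝ᵥ (Aᵀ.mulVec w) = (A.mulVec a) ⬝ᵥ w := by
    intro w
    rw [Matrix.dotProduct_mulVec, Matrix.vecMul_transpose]
  have h := hM.dotProduct_mulVec_nonneg (Sum.elim a fun _ => u0)
  rw [Matrix.neg_mulVec, dotProduct_neg, Matrix.fromBlocks_mulVec] at h
  simp only [star_trivial, Sum.elim_comp_inl, Sum.elim_comp_inr,
    sumElim_dotProduct_sumElim, dotProduct_add,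
    Matrix.sub_mulVec, Matrix.smul_mulVec, dotProduct_sub,
    dotProduct_smul, smul_eq_mul] at h
  set w : Fin n → ℝ := fun i => Aᵀ.mulVec (X.mulVec B) i - Q * D * c i - S * c i with hw
  have haw : a ⬝ᵥ w = (A.mulVec a) ⬝ᵥ X.mulVec B - Q * D * (c ⬝ᵥ a) - S * (c ⬝ᵥ a) := by
    have hw2 : w = Aᵀ.mulVec (X.mulVec B) - (Q * D) • c - S • c := by
      ext i; simp [hw, mul_assoc]
    rw [hw2, dotProduct_sub, dotProduct_sub, dotProduct_smul,
      dotProduct_smul, htr, smul_eq_mul, smul_eq_mul, dotProduct_comm a c]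
  have hvv : a ⬝ᵥ (Matrix.vecMulVec c c *ᵥ a) = (c ⬝ᵥ a) * (c ⬝ᵥ a) := by
    have : Matrix.vecMulVec c c *ᵥ a = (c ⬝ᵥ a) • c := by
      ext i
      simp only [Matrix.mulVec, Matrix.vecMulVec_apply, dotProduct, Pi.smul_apply,
        smul_eq_mul]
      rw [Finset.sum_mul]
      exact Finset.sum_congr rfl fun j _ => by ring
    rw [this, dotProduct_smul, smul_eq_mul, dotProduct_comm a c]
  have hTR : (a ⬝ᵥ ((Matrix.of fun i (_ : Fin 1) => w i) *ᵥ fun _ => u0)) = (a ⬝ᵥ w) * u0 := by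
    have : ((Matrix.of fun i (_ : Fin 1) => w i) *ᵥ fun _ => u0) = u0 • w := by
      ext i
      simp only [Matrix.mulVec, dotProduct, Matrix.of_apply, Fin.sum_univ_one,
        Pi.smul_apply, smul_eq_mul]
      ring
    rw [this, dotProduct_smul, smul_eq_mul, mul_comm]
  have hBL : ((fun _ : Fin 1 => u0) ⬝ᵥ ((Matrix.of fun (_ : Fin 1) j => w j) *ᵥ a)) =
      u0 * (a ⬝ᵥ w) := by
    have : ((Matrix.of fun (_ : Fin 1) j => w j) *ᵥ a) = fun _ => w ⬝ᵥ a := by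
      ext i; simp [Matrix.mulVec, dotProduct]
    rw [this]
    simp only [dotProduct, Fin.sum_univ_one]
    exact congrArg (u0 * ·) (Finset.sum_congr rfl fun i _ => mul_comm _ _)
  have hBR : ((fun _ : Fin 1 => u0) ⬝ᵥ ((Matrix.of fun (_ _ : Fin 1) =>
      B ⬝ᵥ X.mulVec B - Q * D ^ 2 - 2 * S * D - R) *ᵥ fun _ => u0)) =
      u0 * ((B ⬝ᵥ X.mulVec B - Q * D ^ 2 - 2 * S * D - R) * u0) := by
    simp [Matrix.mulVec, dotProduct]
  have hAXA : a ⬝ᵥ ((Aᵀ * X * A) *ᵥ a) = (A.mulVec a) ⬝ᵥ X.mulVec (A.mulVec a) := by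
    rw [← Matrix.mulVec_mulVec, ← Matrix.mulVec_mulVec, htr]
  rw [hAXA, hvv, hTR, hBL, hBR, haw] at h
  rw [Matrix.mulVec_add, Matrix.mulVec_smul, dotProduct_add, add_dotProduct,
    add_dotProduct, dotProduct_smul, smul_dotProduct,
    smul_dotProduct, dotProduct_smul, smul_eq_mul, smul_eq_mul, smul_eq_mul,
    show B ⬝ᵥ X.mulVec (A.mulVec a) = (A.mulVec a) ⬝ᵥ X.mulVec B from hsym _ _]
  simp only [smul_eq_mul] at h ⊢
  nlinarith [h]

/-- Sufficiency direction of the discrete-time KYP lemma: if the KYP block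
matrix is negative semidefinite (for some symmetric PSD `X`), then every
trajectory from zero initial state satisfies the dissipation inequality for the
supply rate `Q y² + 2 S y u + R u²` at every horizon. -/
theorem stmt5 (n : ℕ) (A X : Matrix (Fin n) (Fin n) ℝ) (B c : Fin n → ℝ)
    (D Q S R : ℝ) (hX : X.PosSemidef)
    (hM : (-(Matrix.fromBlocks
        (Aᵀ * X * A - X - Q • Matrix.vecMulVec c c)
        (Matrix.of fun i (_ : Fin 1) =>
          Aᵀ.mulVec (X.mulVec B) i - Q * D * c i - S * c i)
        (Matrix.of fun (_ : Fin 1) j =>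
          Aᵀ.mulVec (X.mulVec B) j - Q * D * c j - S * c j)
        (Matrix.of fun (_ _ : Fin 1) =>
          B ⬝ᵥ X.mulVec B - Q * D ^ 2 - 2 * S * D - R))).PosSemidef) :
    ∀ (u : ℕ → ℝ) (x : ℕ → Fin n → ℝ) (y : ℕ → ℝ),
      x 0 = 0 →
      (∀ t, x (t + 1) = A.mulVec (x t) + u t • B) →
      (∀ t, y t = c ⬝ᵥ x t + D * u t) →
      ∀ tf : ℕ,
        0 ≤ ∑ t ∈ Finset.range (tf + 1),
          (Q * (y t) ^ 2 + 2 * S * y t * u t + R * (u t) ^ 2) := by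
  intro u x y hx0 hxs hys tf
  have hXs : Xᵀ = X := hX.1.eq
  have step : ∀ t : ℕ, x (t + 1) ⬝ᵥ X.mulVec (x (t + 1)) ≤
      x t ⬝ᵥ X.mulVec (x t) + (Q * (y t) ^ 2 + 2 * S * y t * u t + R * (u t) ^ 2) := by
    intro t
    rw [hxs t, hys t]
    exact kyp_step hXs hM (x t) (u t)
  have hsum : ∀ t : ℕ, x (t + 1) ⬝ᵥ X.mulVec (x (t + 1)) ≤
      ∑ s ∈ Finset.range (t + 1), (Q * (y s) ^ 2 + 2 * S * y s * u s + R * (u s) ^ 2) := by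
    intro t
    induction t with
    | zero =>
        have h0 : x 0 ⬝ᵥ X.mulVec (x 0) = 0 := by
          rw [hx0]; simp
        simpa [h0] using step 0
    | succ t ih =>
        rw [Finset.sum_range_succ]
        calc x (t + 1 + 1) ⬝ᵥ X.mulVec (x (t + 1 + 1)) ≤
            x (t + 1) ⬝ᵥ X.mulVec (x (t + 1)) +
              (Q * (y (t + 1)) ^ 2 + 2 * S * y (t + 1) * u (t + 1) + R * (u (t + 1)) ^ 2) :=
              step (t + 1)
          _ ≤ _ := by linarith
  exact le_trans (hX.dotProduct_mulVec_nonneg (x (tf + 1))) (hsum tf)
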